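/- Let X be a rigid topological vector space (every continuous linear operator on X is a scalar multiple of the identity) and Y a topological vector space such that every continuous linear operator Y → X has finite rank and the only continuous linear operator X → Y is zero. Then X × Y supports no multicyclic continuous linear operator: for every continuous linear T : X × Y → X × Y and every finite-dimensional subspace L of X × Y, the span of ⋃_n Tⁿ(L) is not dense in X × Y (assuming X is infinite-dimensional). -/

import Mathlib

/-- If X is a rigid infinite-dimensional topological vector space, every
continuous linear operator Y → X has finite rank, and the only continuous
linear operator X → Y is zero, then X × Y supports no multicyclic continuous
linear operator. -/
theorem stmt_12 {𝕜 : Type*} [RCLike 𝕜] {X Y : Type*}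
    [AddCommGroup X] [Module 𝕜 X] [TopologicalSpace X] [IsTopologicalAddGroup X]
    [ContinuousSMul 𝕜 X]
    [AddCommGroup Y] [Module 𝕜 Y] [TopologicalSpace Y] [IsTopologicalAddGroup Y]
    [ContinuousSMul 𝕜 Y]
    (hXinf : ¬ Module.Finite 𝕜 X)
    (hrigid : ∀ T : X →L[𝕜] X, ∃ c : 𝕜, ∀ x : X, T x = c • x)
    (hYX : ∀ S : Y →L[𝕜] X, Module.Finite 𝕜 (LinearMap.range (S : Y →ₗ[𝕜] X)))
    (hXY : ∀ S : X →L[𝕜] Y, S = 0) :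
    ∀ T : (X × Y) →L[𝕜] (X × Y), ∀ L : Submodule 𝕜 (X × Y), Module.Finite 𝕜 L →
      ¬ Dense ((Submodule.span 𝕜 (⋃ n : ℕ, (T ^ n) '' (L : Set (X × Y)))) : Set (X × Y)) := by
  intro T L hL hdense
  -- Step 1: X is Hausdorff.
  have hT1 : IsClosed ({0} : Set X) := by
    by_contra hne
    have hsub : ¬ closure ({0} : Set X) ⊆ {0} := by
      intro h
      exact hne (isClosed_of_closure_subset h)
    obtain ⟨x₀, hx₀mem, hx₀ne⟩ : ∃ x₀, x₀ ∈ closure ({0} : Set X) ∧ x₀ ≠ 0 := by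
      rcases Set.not_subset.1 hsub with ⟨x₀, hmem, hne'⟩
      exact ⟨x₀, hmem, hne'⟩
    obtain ⟨g, hg⟩ := (LinearMap.toSpanSingleton 𝕜 X x₀).exists_leftInverse_of_injective
      (LinearMap.ker_toSpanSingleton (R := 𝕜) hx₀ne)
    have hgx₀ : g x₀ = 1 := by
      have := LinearMap.congr_fun hg 1
      simpa [LinearMap.toSpanSingleton] using this
    -- any vector in closure {0} generates an indiscrete direction
    have hsmul : ∀ a : 𝕜, a • x₀ ∈ closure ({0} : Set X) := by
      intro a
      have : x₀ ∈ (⊥ : Submodule 𝕜 X).topologicalClosure := by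
        rw [← SetLike.mem_coe, Submodule.topologicalClosure_coe]; simpa using hx₀mem
      have := Submodule.smul_mem _ a this
      rw [← SetLike.mem_coe, Submodule.topologicalClosure_coe] at this; simpa using this
    have hcont : Continuous fun x : X => g x • x₀ := by
      rw [continuous_def]
      intro U hU
      by_cases hex : ∃ a : X, g a • x₀ ∈ U
      · obtain ⟨a, ha⟩ := hex
        have : (fun x : X => g x • x₀) ⁻¹' U = Set.univ := by
          ext b
          simp only [Set.mem_preimage, Set.mem_univ, iff_true]
          have hins : Inseparable (g b • x₀) (g a • x₀) := by
            rw [addGroup_inseparable_iff]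
            have h1 : g b • x₀ - g a • x₀ = (g b - g a) • x₀ := (sub_smul _ _ _).symm
            rw [h1]
            exact hsmul _
          exact (hins.mem_open_iff hU).2 ha
        rw [this]; exact isOpen_univ
      · push_neg at hex
        have : (fun x : X => g x • x₀) ⁻¹' U = ∅ := by
          ext b; simp [hex b]
        rw [this]; exact isOpen_empty
    obtain ⟨c, hc⟩ := hrigid ⟨(LinearMap.toSpanSingleton 𝕜 X x₀).comp g, hcont⟩
    have hc' : ∀ x : X, g x • x₀ = c • x := fun x => hc x
    have hc1 : c = 1 := by
      have := hc' x₀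
      rw [hgx₀, one_smul] at this
      have h0 : (c - 1) • x₀ = 0 := by rw [sub_smul, one_smul, ← this, sub_self]
      rcases smul_eq_zero.1 h0 with h | h
      · exact sub_eq_zero.1 h
      · exact absurd h hx₀ne
    have : Module.Finite 𝕜 X := by
      have hspan : (⊤ : Submodule 𝕜 X) = Submodule.span 𝕜 {x₀} := by
        apply le_antisymm
        · intro x _
          have : x = g x • x₀ := by rw [hc' x, hc1, one_smul]
          rw [this]
          exact Submodule.smul_mem _ _ (Submodule.mem_span_singleton_self x₀)
        · exact le_top
      exact ⟨hspan ▸ ⟨{x₀}, by simp⟩⟩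
    exact hXinf this
  haveI : T2Space X := IsTopologicalAddGroup.t2Space_iff_zero_closed.2 hT1
  -- Step 2: decompose T
  set fstL := ContinuousLinearMap.fst 𝕜 X Y with hfstL
  set inlL := ContinuousLinearMap.inl 𝕜 X Y with hinlL
  set inrL := ContinuousLinearMap.inr 𝕜 X Y with hinrL
  set A : X →L[𝕜] X := fstL.comp (T.comp inlL) with hA
  set B : Y →L[𝕜] X := fstL.comp (T.comp inrL) with hB
  set C : X →L[𝕜] Y := (ContinuousLinearMap.snd 𝕜 X Y).comp (T.comp inlL) with hCdef
  obtain ⟨c, hc⟩ := hrigid A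
  have hT1' : ∀ z : X × Y, (T z).1 = c • z.1 + B z.2 := by
    intro z
    have hz : z = ((z.1, 0) : X × Y) + (0, z.2) := by simp
    calc (T z).1 = (T ((z.1, 0) + ((0 : X), z.2))).1 := by rw [← hz]
      _ = (T (z.1, 0)).1 + (T ((0 : X), z.2)).1 := by rw [map_add]; rfl
      _ = A z.1 + B z.2 := rfl
      _ = c • z.1 + B z.2 := by rw [hc]
  -- the finite-dimensional subspace trapping first coordinates
  haveI := hL
  haveI hfin1 : Module.Finite 𝕜 (L.map (LinearMap.fst 𝕜 X Y)) :=
    Module.Finite.map L (LinearMap.fst 𝕜 X Y)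
  haveI hfin2 := hYX B
  set M : Submodule 𝕜 X := (L.map (LinearMap.fst 𝕜 X Y)) ⊔ LinearMap.range (B : Y →ₗ[𝕜] X)
    with hM
  haveI hMfin : FiniteDimensional 𝕜 M := Submodule.finiteDimensional_sup _ _
  have hkey : (Submodule.span 𝕜 (⋃ n : ℕ, (T ^ n) '' (L : Set (X × Y)))) ≤
      Submodule.comap (LinearMap.fst 𝕜 X Y) M := by
    rw [Submodule.span_le]
    rintro z hz
    simp only [Set.mem_iUnion, Set.mem_image] at hz
    obtain ⟨n, w, hwL, rfl⟩ := hz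
    induction n with
    | zero =>
      simp only [pow_zero, ContinuousLinearMap.one_apply]
      exact SetLike.mem_coe.2 (Submodule.mem_comap.2 (le_sup_left (α := Submodule 𝕜 X)
        (Submodule.mem_map_of_mem hwL)))
    | succ n ih =>
      have hstep : (T ^ (n + 1)) w = T ((T ^ n) w) := by
        rw [pow_succ']; rfl
      rw [hstep]
      have h1 : ((T ^ n) w).1 ∈ M := Submodule.mem_comap.1 (SetLike.mem_coe.1 ih)
      have h2 : (T ((T ^ n) w)).1 ∈ M := by
        rw [hT1']
        exact Submodule.add_mem _ (Submodule.smul_mem _ _ h1)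
          (le_sup_right (α := Submodule 𝕜 X) (LinearMap.mem_range_self _ _))
      exact SetLike.mem_coe.2 (Submodule.mem_comap.2 h2)
  have hdense' : Dense ((Submodule.comap (LinearMap.fst 𝕜 X Y) M : Submodule 𝕜 (X × Y)) :
      Set (X × Y)) := hdense.mono hkey
  have hdM : Dense (M : Set X) := by
    intro x
    rw [mem_closure_iff]
    intro U hU hxU
    obtain ⟨z, hzU, hzS⟩ := hdense'.inter_open_nonempty (Prod.fst ⁻¹' U)
      (hU.preimage continuous_fst) ⟨(x, 0), hxU⟩
    exact ⟨z.1, hzU, Submodule.mem_comap.1 (SetLike.mem_coe.1 hzS)⟩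
  have hMclosed : IsClosed (M : Set X) := Submodule.closed_of_finiteDimensional M
  have hMtop : M = ⊤ := by
    have : (M : Set X) = Set.univ := by
      rw [← hMclosed.closure_eq]; exact hdM.closure_eq
    exact Submodule.eq_top_iff'.2 fun x => by
      rw [← SetLike.mem_coe, this]; trivial
  exact hXinf (by rw [hMtop] at hMfin; exact Module.Finite.equiv (Submodule.topEquiv))
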